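/- For any ring R, any A ∈ M_n(R), and any invertible T ∈ GL_n(Z(R)) with central entries, sdet(T⁻¹AT) = sdet(A). -/

import Mathlib

open Matrix Polynomial

/-- The symmetric determinant of a square matrix over a possibly noncommutative ring:
`sdet A = Σ_{α,β ∈ S_n} sgn α · sgn β · a_{α 1, β 1} ⋯ a_{α n, β n}` (ordered product). -/
def sdet {R : Type*} [Ring R] {n : ℕ} (A : Matrix (Fin n) (Fin n) R) : R :=
  ∑ α : Equiv.Perm (Fin n), ∑ β : Equiv.Perm (Fin n),
    ((Equiv.Perm.sign α : ℤ) * (Equiv.Perm.sign β : ℤ)) •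
      (List.ofFn fun i : Fin n => A (α i) (β i)).prod

/-- The preadjoint matrix `A*`: its `(r,s)` entry is the sum over `α, β ∈ S_n`
with `α s = s` and `β s = r` of `sgn α · sgn β` times the ordered product of the
entries `a_{α i, β i}` for `i ≠ s`. -/
def preadj {R : Type*} [Ring R] {n : ℕ} (A : Matrix (Fin n) (Fin n) R) :
    Matrix (Fin n) (Fin n) R :=
  fun r s =>
    ∑ α ∈ Finset.univ.filter (fun α : Equiv.Perm (Fin n) => α s = s),
      ∑ β ∈ Finset.univ.filter (fun β : Equiv.Perm (Fin n) => β s = r),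
        ((Equiv.Perm.sign α : ℤ) * (Equiv.Perm.sign β : ℤ)) •
          (((List.finRange n).filter (fun i => i ≠ s)).map fun i => A (α i) (β i)).prod

/- ## Auxiliary lemmas -/

private lemma ofFn_prod_sum {R ι : Type*} [Ring R] [Fintype ι] :
    ∀ (n : ℕ) (f : Fin n → ι → R),
      (List.ofFn fun i => ∑ p, f i p).prod
        = ∑ p : Fin n → ι, (List.ofFn fun i => f i (p i)).prod
  | 0, f => by simp
  | n+1, f => by
    rw [Fintype.sum_equiv (Fin.consEquiv fun _ : Fin (n+1) => ι).symm
      (fun p : Fin (n+1) → ι => (List.ofFn fun i => f i (p i)).prod)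
      (fun pq => f 0 pq.1 * (List.ofFn fun i => f i.succ (pq.2 i)).prod)
      (by intro p; rw [List.ofFn_succ, List.prod_cons]; rfl)]
    rw [Fintype.sum_prod_type, List.ofFn_succ, List.prod_cons,
      ofFn_prod_sum n (fun i => f i.succ), Finset.sum_mul_sum]

private lemma ofFn_prod_central {R : Type*} [Ring R] :
    ∀ (n : ℕ) (c a : Fin n → R), (∀ i, c i ∈ Subring.center R) →
      (List.ofFn fun i => c i * a i).prod = (List.ofFn c).prod * (List.ofFn a).prod
  | 0, _, _, _ => by simp
  | n+1, c, a, h => by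
    rw [List.ofFn_succ, List.ofFn_succ (f := c), List.ofFn_succ (f := a),
      List.prod_cons, List.prod_cons, List.prod_cons,
      ofFn_prod_central n _ _ (fun i => h i.succ)]
    have hc : (List.ofFn fun i => c i.succ).prod ∈ Subring.center R :=
      list_prod_mem (by simp only [List.mem_ofFn]; rintro x ⟨i, rfl⟩; exact h i.succ)
    set P := (List.ofFn fun i => c i.succ).prod
    set Q := (List.ofFn fun i => a i.succ).prod
    rw [mul_assoc (c 0), ← mul_assoc (a 0), Subring.mem_center_iff.mp hc (a 0),
      mul_assoc P, mul_assoc (c 0)]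

private lemma sum_fun_eq_sum_perm {M : Type*} [AddCommMonoid M] {n : ℕ}
    (G : (Fin n → Fin n) → M) (h : ∀ k, ¬Function.Bijective k → G k = 0) :
    ∑ k, G k = ∑ σ : Equiv.Perm (Fin n), G ⇑σ := by
  classical
  rw [← Finset.sum_filter_of_ne (p := fun k => Function.Bijective k)
    (fun k _ hk => by by_contra hb; exact hk (h k hb))]
  exact Finset.sum_bij (fun k hk => Equiv.ofBijective k (Finset.mem_filter.1 hk).2)
    (fun _ _ => Finset.mem_univ _)
    (fun _ _ _ _ hEq => by injection hEq)
    (fun σ _ => ⟨⇑σ, Finset.mem_filter.2 ⟨Finset.mem_univ _, σ.bijective⟩,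
      Equiv.coe_fn_injective rfl⟩)
    (fun _ _ => rfl)

private lemma ofFn_coe_prod {R : Type*} [Ring R] {n : ℕ} (g : Fin n → Subring.center R) :
    (List.ofFn fun i => ((g i : R))).prod = ((∏ i, g i : Subring.center R) : R) := by
  have : (List.ofFn fun i => ((g i : R))) = (List.ofFn g).map ((Subring.center R).subtype) := by
    rw [List.map_ofFn]; rfl
  rw [this, ← map_list_prod ((Subring.center R).subtype), List.prod_ofFn]
  rfl

private lemma det_submatrix_zero_of_not_bij {Z : Type*} [CommRing Z] {n : ℕ}
    (M : Matrix (Fin n) (Fin n) Z) (k : Fin n → Fin n) (hk : ¬ Function.Bijective k) :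
    det (M.submatrix id k) = 0 := by
  rw [← Finite.injective_iff_bijective, Function.Injective] at hk
  push_neg at hk
  obtain ⟨i, j, hij, hne⟩ := hk
  exact Matrix.det_zero_of_column_eq hne (fun r => by simp [hij])

theorem sdet_conj {R : Type*} [Ring R] {n : ℕ}
    (A T S : Matrix (Fin n) (Fin n) R)
    (hT : ∀ i j, T i j ∈ Set.center R)
    (hST : S * T = 1) (hTS : T * S = 1) :
    sdet (S * A * T) = sdet A := by
  classical
  have hTc : ∀ (i j : Fin n) (x : R), x * T i j = T i j * x :=
    fun i j x => Semigroup.mem_center_iff.mp (hT i j) x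
  -- the inverse also has central entries
  have hS : ∀ i j, S i j ∈ Set.center R := by
    intro i j
    rw [Semigroup.mem_center_iff]
    intro x
    have hXT : (Matrix.diagonal (fun _ => x)) * T = T * (Matrix.diagonal (fun _ => x)) := by
      ext a b
      rw [Matrix.diagonal_mul, Matrix.mul_diagonal, hTc]
    have hmat : S * (Matrix.diagonal (fun _ => x)) = (Matrix.diagonal (fun _ => x)) * S := by
      calc S * (Matrix.diagonal (fun _ => x))
          = S * (Matrix.diagonal (fun _ => x)) * (T * S) := by rw [hTS, mul_one]
        _ = S * ((Matrix.diagonal (fun _ => x)) * T) * S := by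
            rw [mul_assoc, mul_assoc, mul_assoc]
        _ = S * (T * (Matrix.diagonal (fun _ => x))) * S := by rw [hXT]
        _ = (S * T) * ((Matrix.diagonal (fun _ => x)) * S) := by
            rw [mul_assoc, mul_assoc, mul_assoc]
        _ = (Matrix.diagonal (fun _ => x)) * S := by rw [hST, one_mul]
    have := congrFun (congrFun hmat i) j
    rw [Matrix.mul_diagonal, Matrix.diagonal_mul] at this
    exact this.symm
  -- lift `S` and `T` to matrices over the center
  set S' : Matrix (Fin n) (Fin n) (Subring.center R) := fun i j => ⟨S i j, hS i j⟩ with hS'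
  set T' : Matrix (Fin n) (Fin n) (Subring.center R) := fun i j => ⟨T i j, hT i j⟩ with hT'
  have h1 : S' * T' = 1 := by
    ext i j
    have h2 := congrFun (congrFun hST i) j
    rw [Matrix.mul_apply, Matrix.one_apply] at h2 ⊢
    push_cast
    rw [h2]
    split <;> simp
  have hdet : det S' * det T' = 1 := by rw [← Matrix.det_mul, h1, Matrix.det_one]
  set Pb : (Fin n → Fin n) → (Fin n → Fin n) → R :=
    fun k l => (List.ofFn fun i => A (k i) (l i)).prod with hPb
  -- expand the entries of `S * A * T`
  have entry : ∀ x y, (S * A * T) x y = ∑ q : Fin n × Fin n, S x q.1 * A q.1 q.2 * T q.2 y := by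
    intro x y
    rw [Fintype.sum_prod_type, Matrix.mul_apply]
    simp_rw [Matrix.mul_apply, Finset.sum_mul]
    rw [Finset.sum_comm]
  have key : ∀ α β : Equiv.Perm (Fin n),
      (List.ofFn fun i => (S * A * T) (α i) (β i)).prod
        = ∑ q : (Fin n → Fin n) × (Fin n → Fin n),
            (((∏ i, S' (α i) (q.1 i)) * (∏ i, T' (q.2 i) (β i)) : Subring.center R) : R)
              * Pb q.1 q.2 := by
    intro α β
    have e1 : (List.ofFn fun i => (S * A * T) (α i) (β i)).prod
        = ∑ p : Fin n → Fin n × Fin n,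
            (List.ofFn fun i =>
              S (α i) (p i).1 * A (p i).1 (p i).2 * T (p i).2 (β i)).prod := by
      simp_rw [entry]
      exact ofFn_prod_sum n _
    rw [e1]
    refine Fintype.sum_equiv (Equiv.arrowProdEquivProdArrow (Fin n) (fun _ => Fin n) (fun _ => Fin n)) _ _ ?_
    intro p
    have hfac : ∀ i : Fin n, S (α i) (p i).1 * A (p i).1 (p i).2 * T (p i).2 (β i)
        = (S (α i) (p i).1 * T (p i).2 (β i)) * A (p i).1 (p i).2 := by
      intro i
      rw [mul_assoc, hTc _ _ (A (p i).1 (p i).2), ← mul_assoc]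
    simp only [hfac]
    rw [ofFn_prod_central n _ _ (fun i => mul_mem (hS (α i) (p i).1) (hT (p i).2 (β i)))]
    congr 1
    have hcoe : (fun i => S (α i) (p i).1 * T (p i).2 (β i))
        = fun i => ((S' (α i) (p i).1 * T' (p i).2 (β i) : Subring.center R) : R) := rfl
    rw [hcoe, ofFn_coe_prod, Finset.prod_mul_distrib]
    rfl
  -- the double sum over permutations of the central coefficients is a determinant product
  have inner : ∀ (k l : Fin n → Fin n),
      (∑ α : Equiv.Perm (Fin n), ∑ β : Equiv.Perm (Fin n),
        ((Equiv.Perm.sign α : ℤ) * (Equiv.Perm.sign β : ℤ)) •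
          ((((∏ i, S' (α i) (k i)) * (∏ i, T' (l i) (β i)) : Subring.center R) : R)
            * Pb k l))
        = ((det (S'.submatrix id k) * det (T'ᵀ.submatrix id l) : Subring.center R) : R)
            * Pb k l := by
    intro k l
    rw [Matrix.det_apply', Matrix.det_apply']
    push_cast
    simp only [Matrix.submatrix_apply, Matrix.transpose_apply, id_eq]
    simp only [Finset.sum_mul, Finset.mul_sum]
    conv_rhs => rw [Finset.sum_comm]
    refine Finset.sum_congr rfl fun α _ => Finset.sum_congr rfl fun β _ => ?_
    simp only [← zsmul_eq_mul, smul_mul_assoc, mul_smul_comm, smul_smul, mul_assoc]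
    rw [mul_comm ((Equiv.Perm.sign β : ℤ)) ((Equiv.Perm.sign α : ℤ))]
  -- main computation
  calc sdet (S * A * T)
      = ∑ q : (Fin n → Fin n) × (Fin n → Fin n),
          ∑ α : Equiv.Perm (Fin n), ∑ β : Equiv.Perm (Fin n),
            ((Equiv.Perm.sign α : ℤ) * (Equiv.Perm.sign β : ℤ)) •
              ((((∏ i, S' (α i) (q.1 i)) * (∏ i, T' (q.2 i) (β i)) : Subring.center R) : R)
                * Pb q.1 q.2) := by
        rw [sdet]
        simp_rw [key, Finset.smul_sum]
        exact Eq.trans (Finset.sum_congr rfl fun α _ => Finset.sum_comm) Finset.sum_comm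
    _ = ∑ k : Fin n → Fin n, ∑ l : Fin n → Fin n,
          ((det (S'.submatrix id k) * det (T'ᵀ.submatrix id l) : Subring.center R) : R)
            * Pb k l := by
        rw [Fintype.sum_prod_type]
        exact Finset.sum_congr rfl fun k _ => Finset.sum_congr rfl fun l _ => inner k l
    _ = ∑ σ : Equiv.Perm (Fin n), ∑ τ : Equiv.Perm (Fin n),
          ((det (S'.submatrix id ⇑σ) * det (T'ᵀ.submatrix id ⇑τ) : Subring.center R) : R)
            * Pb ⇑σ ⇑τ := by
        rw [sum_fun_eq_sum_perm _ (fun k hk => by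
          simp [det_submatrix_zero_of_not_bij S' k hk])]
        refine Finset.sum_congr rfl fun σ _ => ?_
        exact sum_fun_eq_sum_perm _ (fun l hl => by
          simp [det_submatrix_zero_of_not_bij T'ᵀ l hl])
    _ = sdet A := by
        rw [sdet]
        refine Finset.sum_congr rfl fun σ _ => Finset.sum_congr rfl fun τ _ => ?_
        have hc : (det (S'.submatrix id ⇑σ) * det (T'ᵀ.submatrix id ⇑τ) : Subring.center R)
            = (((Equiv.Perm.sign σ : ℤ) * (Equiv.Perm.sign τ : ℤ) : ℤ) : Subring.center R) := by
          rw [Matrix.det_permute', Matrix.det_permute', Matrix.det_transpose,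
            mul_mul_mul_comm, hdet, mul_one]
          push_cast
          ring
        rw [hc]
        rw [show ((((Equiv.Perm.sign σ : ℤ) * (Equiv.Perm.sign τ : ℤ) : ℤ) :
            Subring.center R) : R)
          = (((Equiv.Perm.sign σ : ℤ) * (Equiv.Perm.sign τ : ℤ) : ℤ) : R) from
            map_intCast ((Subring.center R).subtype) _]
        rw [zsmul_eq_mul]
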